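/- Let S be a nonempty compact convex subset of [0,1]^n that contains both the all-zeros vector 0 and the all-ones vector 1. Then sup over (x,w) in the convex hull of G_S of |w − ∏_{j=1}^n x_j^{α_j}| equals C_d = (1 − 1/d)·d^{1/(1−d)}; in particular this equality holds for S = [0,1]^n. -/

import Mathlib

lemma u_pow (d : ℕ) (hd2 : 2 ≤ d) :
    ((d : ℝ) ^ ((1:ℝ)/(1-(d:ℝ)))) ^ (d-1) = 1/(d:ℝ) := by
  have hD0 : (0:ℝ) < (d:ℝ) := by exact_mod_cast Nat.lt_of_lt_of_le Nat.zero_lt_two hd2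
  have hD2 : (2:ℝ) ≤ (d:ℝ) := by exact_mod_cast hd2
  rw [← Real.rpow_natCast ((d:ℝ) ^ ((1:ℝ)/(1-(d:ℝ)))) (d-1), ← Real.rpow_mul hD0.le]
  have h : (1:ℝ)/(1-(d:ℝ)) * ((d-1 : ℕ):ℝ) = -1 := by
    rw [Nat.cast_sub (by omega), Nat.cast_one]
    have hne : (1:ℝ) - (d:ℝ) ≠ 0 := by linarith
    field_simp
    ring
  rw [h, Real.rpow_neg_one, one_div]

lemma lemA (d : ℕ) (hd2 : 2 ≤ d) (t : ℝ) (ht0 : 0 ≤ t) (ht1 : t ≤ 1) :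
    t - t ^ d ≤ (1 - 1/(d:ℝ)) * (d:ℝ) ^ ((1:ℝ)/(1-(d:ℝ))) := by
  set D : ℝ := (d:ℝ) with hDdef
  set u : ℝ := D ^ ((1:ℝ)/(1-D)) with hudef
  have hD2 : (2:ℝ) ≤ D := by show (2:ℝ) ≤ (d:ℝ); exact_mod_cast hd2
  have hD0 : (0:ℝ) < D := by linarith
  have hu0 : (0:ℝ) < u := Real.rpow_pos_of_pos hD0 _
  have hukey : u ^ (d-1) = 1/D := u_pow d hd2
  have hud : u ^ d = 1/D * u := by
    have hs : d = (d-1) + 1 := by omega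
    rw [hs, pow_succ, hukey]
  have h := Real.geom_mean_le_arith_mean_weighted Finset.univ
      ![1/D, 1-1/D] ![t^d, u^d]
      (by
        intro i _
        fin_cases i
        · show (0:ℝ) ≤ 1/D; positivity
        · show (0:ℝ) ≤ 1 - 1/D; rw [sub_nonneg, div_le_one hD0]; linarith)
      (by
        simp only [Fin.sum_univ_two, Matrix.cons_val_zero, Matrix.cons_val_one,
          Matrix.head_cons]
        ring)
      (by
        intro i _
        fin_cases i
        · show (0:ℝ) ≤ t ^ d; positivity
        · show (0:ℝ) ≤ u ^ d; positivity)
  simp only [Fin.prod_univ_two, Fin.sum_univ_two, Matrix.cons_val_zero,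
    Matrix.cons_val_one, Matrix.head_cons] at h
  have e1 : ((t ^ d : ℝ)) ^ ((1:ℝ)/D) = t := by
    rw [← Real.rpow_natCast t d, ← Real.rpow_mul ht0]
    have : (d:ℝ) * ((1:ℝ)/D) = 1 := by field_simp; exact hDdef.symm
    rw [this, Real.rpow_one]
  have e2 : ((u ^ d : ℝ)) ^ (1 - 1/D) = 1/D := by
    rw [← Real.rpow_natCast u d, ← Real.rpow_mul hu0.le]
    have h3 : (d:ℝ) * (1 - 1/D) = ((d-1 : ℕ):ℝ) := by
      rw [Nat.cast_sub (by omega), Nat.cast_one]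
      field_simp
      rw [hDdef]
    rw [h3, Real.rpow_natCast, hukey]
  rw [e1, e2] at h
  rw [hud] at h
  -- h : t * (1/D) ≤ 1/D * t^d + (1-1/D) * (1/D)
  have h6 : (1/D) * (t - t ^ d) ≤ (1/D) * ((1 - 1/D) * u) := by nlinarith [h]
  exact le_of_mul_le_mul_left h6 (by positivity)


lemma lemB (d : ℕ) (hd2 : 2 ≤ d) :
    (1 - 1/(d:ℝ)) ^ d ≤ (1 - 1/(d:ℝ)) * (d:ℝ) ^ ((1:ℝ)/(1-(d:ℝ))) := by
  set D : ℝ := (d:ℝ) with hDdef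
  set u : ℝ := D ^ ((1:ℝ)/(1-D)) with hudef
  have hD2 : (2:ℝ) ≤ D := by show (2:ℝ) ≤ (d:ℝ); exact_mod_cast hd2
  have hD0 : (0:ℝ) < D := by linarith
  have hu0 : (0:ℝ) < u := Real.rpow_pos_of_pos hD0 _
  set k : ℕ := d - 1 with hkdef
  have hk1 : 1 ≤ k := by omega
  have hukey : u ^ k = 1/D := u_pow d hd2
  set K : ℝ := (k:ℝ) with hKdef
  have hKD : K + 1 = D := by
    show ((d-1:ℕ):ℝ) + 1 = (d:ℝ)
    rw [Nat.cast_sub (by omega)]; ring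
  have hK1 : (1:ℝ) ≤ K := by show (1:ℝ) ≤ (k:ℝ); exact_mod_cast hk1
  have hK0 : (0:ℝ) < K := by linarith
  set a : ℝ := 1 - 1/D with hadef
  have ha0 : (0:ℝ) ≤ a := by
    rw [hadef, sub_nonneg, div_le_one hD0]; linarith
  have haK : a = K/D := by rw [hadef]; field_simp; linarith
  have hKinv : (0:ℝ) ≤ 1/K := by positivity
  have step1 : (2:ℝ) ≤ (1 + 1/K) ^ k := by
    have h := one_add_mul_le_pow (show (-2:ℝ) ≤ 1/K by linarith) k
    have : K * (1/K) = 1 := by field_simp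
    calc (2:ℝ) = 1 + K * (1/K) := by rw [this]; norm_num
    _ = 1 + (k:ℝ) * (1/K) := by rw [← hKdef]
    _ ≤ (1 + 1/K) ^ k := h
  have step2 : D ≤ (2:ℝ) ^ k := by
    have h := one_add_mul_le_pow (show (-2:ℝ) ≤ (1:ℝ) by norm_num) k
    have : (1:ℝ) + (k:ℝ) * 1 = K + 1 := by rw [← hKdef]; ring
    rw [this, hKD] at h
    calc D ≤ (1+1:ℝ) ^ k := h
    _ = (2:ℝ) ^ k := by norm_num
  have step3 : D ≤ (1 + 1/K) ^ (k*k) := by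
    rw [pow_mul]
    exact le_trans step2 (pow_le_pow_left₀ (by norm_num) step1 k)
  have ha1 : a * (1 + 1/K) = 1 := by
    rw [haK]
    have hKne : K ≠ 0 := ne_of_gt hK0
    have hDne : D ≠ 0 := ne_of_gt hD0
    field_simp
    rw [← hKD]
  have hgt0 : (0:ℝ) < (1 + 1/K) ^ (k*k) := by positivity
  have step4 : a ^ (k*k) ≤ 1/D := by
    have heq : a ^ (k*k) = 1 / ((1 + 1/K) ^ (k*k)) := by
      rw [eq_div_iff (ne_of_gt hgt0), ← mul_pow, ha1, one_pow]
    rw [heq]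
    exact one_div_le_one_div_of_le hD0 step3
  have step5 : a ^ k ≤ u := by
    have h := (pow_le_pow_iff_left₀ (pow_nonneg ha0 k) hu0.le (by omega : k ≠ 0))
    apply h.mp
    rw [← pow_mul, hukey]
    exact step4
  have hdk : d = k + 1 := by omega
  calc a ^ d = a ^ k * a := by rw [hdk, pow_succ]
  _ ≤ u * a := mul_le_mul_of_nonneg_right step5 ha0
  _ = a * u := mul_comm _ _

lemma lemE : ∀ (d : ℕ) (a b : ℝ), 0 ≤ b → b ≤ a → a ≤ 1 →
    a ^ d - b ^ d ≤ (d:ℝ) * (a - b) := by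
  intro d
  induction d with
  | zero => intro a b _ _ _; norm_num
  | succ m ih =>
    intro a b hb0 hba ha1
    have h1 := ih a b hb0 hba ha1
    have hbm : b ^ m ≤ 1 := pow_le_one₀ hb0 (le_trans hba ha1)
    have hbm0 : 0 ≤ b ^ m := pow_nonneg hb0 m
    have ham : a ^ m - b ^ m ≥ 0 := by
      have := pow_le_pow_left₀ hb0 hba m; linarith
    have ha0 : 0 ≤ a := le_trans hb0 hba
    have key : a ^ (m+1) - b ^ (m+1) = a * (a ^ m - b ^ m) + (a - b) * b ^ m := by
      ring
    rw [key]
    push_cast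
    nlinarith [mul_le_mul_of_nonneg_left h1 ha0]


lemma lemC (n d : ℕ) (α : Fin n → ℕ) (hd : d = ∑ j, α j) (hd0 : 0 < d)
    (x : Fin n → ℝ) (hx : ∀ j, 0 ≤ x j) :
    ∏ j, x j ^ α j ≤ ((∑ j, (α j : ℝ) * x j) / (d:ℝ)) ^ d := by
  have hD0 : (0:ℝ) < (d:ℝ) := by exact_mod_cast hd0
  have hcast : ∑ j, ((α j : ℝ)) = (d:ℝ) := by
    rw [hd]; push_cast; rfl
  have hw : ∑ j, ((α j : ℝ) / (d:ℝ)) = 1 := by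
    rw [← Finset.sum_div, hcast, div_self (ne_of_gt hD0)]
  have hAM := Real.geom_mean_le_arith_mean_weighted Finset.univ
      (fun j => (α j : ℝ) / (d:ℝ)) x
      (fun j _ => by positivity) hw (fun j _ => hx j)
  have hR : ∑ j, ((α j : ℝ) / (d:ℝ)) * x j = (∑ j, (α j : ℝ) * x j) / (d:ℝ) := by
    rw [Finset.sum_div]
    exact Finset.sum_congr rfl fun j _ => by ring
  rw [hR] at hAM
  have hL0 : (0:ℝ) ≤ ∏ j, x j ^ ((α j : ℝ) / (d:ℝ)) :=
    Finset.prod_nonneg fun j _ => Real.rpow_nonneg (hx j) _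
  have hfin := pow_le_pow_left₀ hL0 hAM d
  have hLeq : (∏ j, x j ^ ((α j : ℝ) / (d:ℝ))) ^ d = ∏ j, x j ^ α j := by
    rw [← Finset.prod_pow]
    refine Finset.prod_congr rfl fun j _ => ?_
    rw [← Real.rpow_natCast (x j ^ ((α j : ℝ) / (d:ℝ))) d, ← Real.rpow_mul (hx j)]
    rw [div_mul_cancel₀ _ (ne_of_gt hD0), Real.rpow_natCast]
  rwa [hLeq] at hfin

lemma lemD (n : ℕ) (α : Fin n → ℕ) (x : Fin n → ℝ)
    (hx0 : ∀ j, 0 ≤ x j) (hx1 : ∀ j, x j ≤ 1) (s : Finset (Fin n)) :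
    (1 + ∑ j ∈ s, (α j : ℝ) * (x j - 1) ≤ ∏ j ∈ s, x j ^ α j) ∧
      (∏ j ∈ s, x j ^ α j ≤ 1) ∧ (0 ≤ ∏ j ∈ s, x j ^ α j) := by
  induction s using Finset.induction_on with
  | empty => simp
  | insert j s ha ih =>
    obtain ⟨ih1, ih2, ih3⟩ := ih
    rw [Finset.prod_insert ha, Finset.sum_insert ha]
    have hbern : 1 + (α j : ℝ) * (x j - 1) ≤ x j ^ α j := by
      have h := one_add_mul_le_pow (show (-2:ℝ) ≤ x j - 1 by linarith [hx0 j]) (α j)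
      calc 1 + (α j : ℝ) * (x j - 1) ≤ (1 + (x j - 1)) ^ α j := h
      _ = x j ^ α j := by ring_nf
    have hq1 : x j ^ α j ≤ 1 := pow_le_one₀ (hx0 j) (hx1 j)
    have hq0 : 0 ≤ x j ^ α j := pow_nonneg (hx0 j) _
    refine ⟨?_, ?_, ?_⟩
    · nlinarith [ih1, ih2, ih3, hbern, hq0, hq1]
    · exact mul_le_one₀ hq1 ih3 ih2
    · exact mul_nonneg hq0 ih3

lemma lemF (n : ℕ) (α : Fin n → ℕ) (hα : ∀ j, 1 ≤ α j) (x : Fin n → ℝ)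
    (hx0 : ∀ j, 0 ≤ x j) (hx1 : ∀ j, x j ≤ 1) (j : Fin n) :
    ∏ i, x i ^ α i ≤ x j := by
  have h1 : ∏ i, x i ^ α i ≤ ∏ i, (if i = j then x j else 1) := by
    refine Finset.prod_le_prod (fun i _ => pow_nonneg (hx0 i) _) fun i _ => ?_
    by_cases h : i = j
    · simp only [h, if_pos rfl]
      exact pow_le_of_le_one (hx0 j) (hx1 j) (by have := hα j; omega)
    · simp only [if_neg h]
      exact pow_le_one₀ (hx0 i) (hx1 i)
  calc ∏ i, x i ^ α i ≤ ∏ i, (if i = j then x j else 1) := h1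
  _ = x j := by simp


lemma auxmain (n : ℕ) (hn : 1 ≤ n) (α : Fin n → ℕ) (hα : ∀ j, 1 ≤ α j)
    (d : ℕ) (hd : d = ∑ j, α j) (hd2 : 2 ≤ d)
    (S : Set (Fin n → ℝ)) (hSsub : S ⊆ Set.Icc 0 1)
    (h0 : (0 : Fin n → ℝ) ∈ S) (h1 : (1 : Fin n → ℝ) ∈ S) :
    sSup ((fun p : (Fin n → ℝ) × ℝ => |p.2 - ∏ j, p.1 j ^ α j|) ''
        convexHull ℝ {p : (Fin n → ℝ) × ℝ | p.1 ∈ S ∧ p.2 = ∏ j, p.1 j ^ α j})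
      = (1 - 1 / (d : ℝ)) * (d : ℝ) ^ ((1 : ℝ) / (1 - (d : ℝ))) := by
  have hD2 : (2:ℝ) ≤ (d:ℝ) := by exact_mod_cast hd2
  have hD0 : (0:ℝ) < (d:ℝ) := by linarith
  set D : ℝ := (d:ℝ) with hDdef
  set C : ℝ := (1 - 1/D) * D ^ ((1:ℝ)/(1-D)) with hCdef
  set G : Set ((Fin n → ℝ) × ℝ) :=
    {p : (Fin n → ℝ) × ℝ | p.1 ∈ S ∧ p.2 = ∏ j, p.1 j ^ α j} with hGdef
  set T : Set ((Fin n → ℝ) × ℝ) :=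
    {p : (Fin n → ℝ) × ℝ | (∀ j, 0 ≤ p.1 j) ∧ (∀ j, p.1 j ≤ 1) ∧ 0 ≤ p.2 ∧
      (∀ j, p.2 ≤ p.1 j) ∧ (∑ j, (α j : ℝ) * p.1 j) - (D - 1) ≤ p.2} with hTdef
  have hC0 : 0 ≤ C := by
    apply mul_nonneg
    · rw [sub_nonneg, div_le_one hD0]; linarith
    · exact Real.rpow_nonneg hD0.le _
  have hcastsum : ∑ j, ((α j : ℝ)) = D := by rw [hDdef, hd]; push_cast; rfl
  -- T is convex
  have hTconv : Convex ℝ T := by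
    intro p hp q hq a b ha hb hab
    obtain ⟨hp1, hp2, hp3, hp4, hp5⟩ := hp
    obtain ⟨hq1, hq2, hq3, hq4, hq5⟩ := hq
    refine ⟨?_, ?_, ?_, ?_, ?_⟩ <;>
      simp only [Prod.fst_add, Prod.smul_fst, Prod.snd_add, Prod.smul_snd,
        Pi.add_apply, Pi.smul_apply, smul_eq_mul]
    · intro j; exact add_nonneg (mul_nonneg ha (hp1 j)) (mul_nonneg hb (hq1 j))
    · intro j; nlinarith [hp2 j, hq2 j, hp1 j, hq1 j]
    · exact add_nonneg (mul_nonneg ha hp3) (mul_nonneg hb hq3)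
    · intro j
      exact add_le_add (mul_le_mul_of_nonneg_left (hp4 j) ha)
        (mul_le_mul_of_nonneg_left (hq4 j) hb)
    · have hsplit : ∑ j, (α j : ℝ) * (a * p.1 j + b * q.1 j)
          = a * ∑ j, (α j : ℝ) * p.1 j + b * ∑ j, (α j : ℝ) * q.1 j := by
        rw [Finset.mul_sum, Finset.mul_sum, ← Finset.sum_add_distrib]
        exact Finset.sum_congr rfl fun j _ => by ring
      rw [hsplit]
      have h5a := mul_le_mul_of_nonneg_left hp5 ha
      have h5b := mul_le_mul_of_nonneg_left hq5 hb
      nlinarith [h5a, h5b]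
  -- G ⊆ T
  have hGsubT : G ⊆ T := by
    rintro p ⟨hpS, hpw⟩
    obtain ⟨hl, hr⟩ := hSsub hpS
    have hx0 : ∀ j, 0 ≤ p.1 j := fun j => hl j
    have hx1 : ∀ j, p.1 j ≤ 1 := fun j => hr j
    obtain ⟨hd1, _, hd3⟩ := lemD n α p.1 hx0 hx1 Finset.univ
    refine ⟨hx0, hx1, ?_, ?_, ?_⟩
    · rw [hpw]; exact hd3
    · intro j; rw [hpw]; exact lemF n α hα p.1 hx0 hx1 j
    · rw [hpw]
      have hsum : ∑ j, (α j : ℝ) * (p.1 j - 1)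
          = (∑ j, (α j : ℝ) * p.1 j) - D := by
        rw [← hcastsum, ← Finset.sum_sub_distrib]
        exact Finset.sum_congr rfl fun j _ => by ring
      rw [hsum] at hd1
      linarith
  have hsubT : convexHull ℝ G ⊆ T := convexHull_min hGsubT hTconv
  -- upper bound for every element of the image
  have hbound : ∀ y ∈ ((fun p : (Fin n → ℝ) × ℝ => |p.2 - ∏ j, p.1 j ^ α j|) ''
      convexHull ℝ G), y ≤ C := by
    rintro y ⟨p, hpH, rfl⟩
    obtain ⟨hx0, hx1, hw0, hwx, hwsum⟩ := hsubT hpH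
    have hw1 : p.2 ≤ 1 := le_trans (hwx ⟨0, hn⟩) (hx1 ⟨0, hn⟩)
    rw [abs_le]
    constructor
    · -- -C ≤ w - fx, i.e. fx - w ≤ C
      rw [neg_le, neg_sub]
      set s : ℝ := ∑ j, (α j : ℝ) * p.1 j with hsdef
      have hs0 : 0 ≤ s :=
        Finset.sum_nonneg fun j _ => mul_nonneg (Nat.cast_nonneg _) (hx0 j)
      have hsD : s ≤ D := by
        rw [hsdef, ← hcastsum]
        exact Finset.sum_le_sum fun j _ => by
          nlinarith [hx1 j, Nat.cast_nonneg (α := ℝ) (α j)]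
      have hfx : ∏ j, p.1 j ^ α j ≤ (s/D) ^ d :=
        lemC n d α hd (by omega) p.1 hx0
      have hB := lemB d hd2
      have hBB : (D-1)/D = 1 - 1/D := by field_simp
      rcases le_or_gt s (D - 1) with hcase | hcase
      · have hsd : (s/D) ^ d ≤ ((D-1)/D) ^ d := by
          apply pow_le_pow_left₀ (by positivity)
          gcongr
        rw [hBB] at hsd
        linarith
      · have hE := lemE d (s/D) ((D-1)/D)
          (div_nonneg (by linarith) hD0.le) (by gcongr <;> linarith)
          (by rw [div_le_one hD0]; exact hsD)
        have hDmul : D * (s/D - (D-1)/D) = s - (D-1) := by field_simp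
        rw [hDmul] at hE
        rw [hBB] at hE
        linarith
    · -- w - fx ≤ C
      have hwd : p.2 ^ d ≤ ∏ j, p.1 j ^ α j := by
        calc p.2 ^ d = ∏ j, p.2 ^ α j := by
              rw [Finset.prod_pow_eq_pow_sum, ← hd]
        _ ≤ ∏ j, p.1 j ^ α j :=
              Finset.prod_le_prod (fun j _ => pow_nonneg hw0 _)
                (fun j _ => pow_le_pow_left₀ hw0 (hwx j) _)
      have hA := lemA d hd2 p.2 hw0 hw1
      linarith
  -- the supremum is attained
  set u : ℝ := D ^ ((1:ℝ)/(1-D)) with hudef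
  have hu0 : (0:ℝ) < u := Real.rpow_pos_of_pos hD0 _
  have hu1 : u ≤ 1 := by
    apply Real.rpow_le_one_of_one_le_of_nonpos (by linarith)
    apply div_nonpos_of_nonneg_of_nonpos zero_le_one
    linarith
  have hud : u ^ d = 1/D * u := by
    have hs : d = (d-1) + 1 := by omega
    rw [hs, pow_succ, u_pow d hd2]
  have hz0 : (((0 : Fin n → ℝ), (0:ℝ)) : (Fin n → ℝ) × ℝ) ∈ G := by
    have hzz : ∏ j, ((0 : Fin n → ℝ)) j ^ α j = 0 :=
      Finset.prod_eq_zero (Finset.mem_univ (⟨0, hn⟩ : Fin n))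
        (by rw [Pi.zero_apply]; exact zero_pow (by have := hα ⟨0, hn⟩; omega))
    exact ⟨h0, hzz.symm⟩
  have hz1 : (((1 : Fin n → ℝ), (1:ℝ)) : (Fin n → ℝ) × ℝ) ∈ G := by
    have hzz : ∏ j, ((1 : Fin n → ℝ)) j ^ α j = 1 := by
      simp
    exact ⟨h1, hzz.symm⟩
  have heq : (1-u) • (((0 : Fin n → ℝ), (0:ℝ)) : (Fin n → ℝ) × ℝ)
      + u • (((1 : Fin n → ℝ), (1:ℝ)) : (Fin n → ℝ) × ℝ)
      = ((fun _ => u : Fin n → ℝ), u) := by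
    refine Prod.ext ?_ ?_
    · funext j
      simp
    · simp
  have hmem : (((fun _ => u : Fin n → ℝ), u) : (Fin n → ℝ) × ℝ) ∈ convexHull ℝ G := by
    rw [← heq]
    exact (convex_convexHull ℝ G) (subset_convexHull ℝ G hz0)
      (subset_convexHull ℝ G hz1) (by linarith) hu0.le (by ring)
  have hval : (fun p : (Fin n → ℝ) × ℝ => |p.2 - ∏ j, p.1 j ^ α j|)
      ((fun _ => u : Fin n → ℝ), u) = C := by
    simp only
    have hprod : ∏ j, ((fun _ => u : Fin n → ℝ) j) ^ α j = u ^ d := by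
      rw [Finset.prod_pow_eq_pow_sum, ← hd]
    rw [hprod, hud]
    rw [abs_of_nonneg (by nlinarith [hu0.le, hD0, hD2])]
    rw [hCdef, hudef]
    field_simp
  apply le_antisymm
  · exact Real.sSup_le hbound hC0
  · apply le_csSup ⟨C, fun y hy => hbound y hy⟩
    exact ⟨_, hmem, hval⟩


/-- If `0, 1 ∈ S`, the convex hull error of the monomial over `S ⊆ [0,1]^n` equals `C_d`;
in particular this holds for `S = [0,1]^n`. -/
theorem stmt1 (n : ℕ) (hn : 1 ≤ n) (α : Fin n → ℕ) (hα : ∀ j, 1 ≤ α j)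
    (d : ℕ) (hd : d = ∑ j, α j) (hd2 : 2 ≤ d)
    (S : Set (Fin n → ℝ)) (hS : S.Nonempty) (hScompact : IsCompact S)
    (hSconvex : Convex ℝ S) (hSsub : S ⊆ Set.Icc 0 1)
    (h0 : (0 : Fin n → ℝ) ∈ S) (h1 : (1 : Fin n → ℝ) ∈ S) :
    sSup ((fun p : (Fin n → ℝ) × ℝ => |p.2 - ∏ j, p.1 j ^ α j|) ''
        convexHull ℝ {p : (Fin n → ℝ) × ℝ | p.1 ∈ S ∧ p.2 = ∏ j, p.1 j ^ α j})
      = (1 - 1 / (d : ℝ)) * (d : ℝ) ^ ((1 : ℝ) / (1 - (d : ℝ))) ∧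
    sSup ((fun p : (Fin n → ℝ) × ℝ => |p.2 - ∏ j, p.1 j ^ α j|) ''
        convexHull ℝ {p : (Fin n → ℝ) × ℝ |
          p.1 ∈ Set.Icc (0 : Fin n → ℝ) 1 ∧ p.2 = ∏ j, p.1 j ^ α j})
      = (1 - 1 / (d : ℝ)) * (d : ℝ) ^ ((1 : ℝ) / (1 - (d : ℝ))) := by
  constructor
  · exact auxmain n hn α hα d hd hd2 S hSsub h0 h1
  · exact auxmain n hn α hα d hd hd2 (Set.Icc 0 1) subset_rfl
      (Set.left_mem_Icc.mpr zero_le_one) (Set.right_mem_Icc.mpr zero_le_one)
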